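/- The function u₂(x,t) = c₂ t^{-1/2} (x²/(4t))^{(1−2α)/2} · ₁F₁(1−α; (3−2α)/2; −x²/(4t)) satisfies u_t − u_{xx} − (2α/x) u_x = 0 for all x > 0 and t > 0. -/

import Mathlib

/-- Pochhammer symbol (a)_m = a(a+1)⋯(a+m−1). -/
noncomputable def poch (a : ℝ) (m : ℕ) : ℝ := ∏ i ∈ Finset.range m, (a + i)

/-- The confluent hypergeometric function ₁F₁(a;c;x). -/
noncomputable def F11 (a c x : ℝ) : ℝ :=
  ∑' m : ℕ, poch a m / (poch c m * (Nat.factorial m : ℝ)) * x ^ m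

/-- u₂(x,t) = c₂ t^{-1/2} (x²/(4t))^{(1−2α)/2} ₁F₁(1−α; (3−2α)/2; −x²/(4t)). -/
noncomputable def uSol2 (α c₂ x t : ℝ) : ℝ :=
  c₂ * t ^ (-(1 / 2) : ℝ) * (x ^ 2 / (4 * t)) ^ (((1 : ℝ) - 2 * α) / 2)
    * F11 (1 - α) ((3 - 2 * α) / 2) (-(x ^ 2) / (4 * t))



noncomputable def KC (α c₂ : ℝ) (m : ℕ) : ℝ :=
  c₂ * (poch (1 - α) m / (poch ((3 - 2 * α) / 2) m * (Nat.factorial m : ℝ)))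
    * (-1 : ℝ) ^ m * (4 : ℝ) ^ (-(((1 : ℝ) - 2 * α) / 2 + m))

lemma poch_succ (a : ℝ) (m : ℕ) : poch a (m + 1) = poch a m * (a + m) := by
  simp [poch, Finset.prod_range_succ]

lemma poch_ne {α : ℝ} (hc : ∀ n : ℕ, (3 - 2 * α) / 2 ≠ -(n : ℝ)) (m : ℕ) :
    poch ((3 - 2 * α) / 2) m ≠ 0 := by
  rw [poch, Finset.prod_ne_zero_iff]
  intro i _
  intro h
  exact hc i (by linarith)

lemma KC_succ {α : ℝ} (c₂ : ℝ) (hc : ∀ n : ℕ, (3 - 2 * α) / 2 ≠ -(n : ℝ)) (m : ℕ) :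
    KC α c₂ (m + 1) * (4 * ((3 - 2 * α) / 2 + m) * (m + 1)) = KC α c₂ m * (-(1 - α + m)) := by
  have h1 : poch ((3 - 2 * α) / 2) m ≠ 0 := poch_ne hc m
  have h2 : ((3 - 2 * α) / 2 + m) ≠ 0 := by
    intro h; exact hc m (by linarith)
  have h3 : (Nat.factorial m : ℝ) ≠ 0 := Nat.cast_ne_zero.mpr (Nat.factorial_ne_zero m)
  have h4 : ((m : ℝ) + 1) ≠ 0 := by positivity
  have h5 : (-(((1 : ℝ) - 2 * α) / 2 + ((m : ℕ) + 1 : ℕ))) =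
      (-(((1 : ℝ) - 2 * α) / 2 + m)) + (-1) := by push_cast; ring
  rw [KC, KC, poch_succ, poch_succ, h5, Real.rpow_add (by norm_num : (0:ℝ) < 4),
    Real.rpow_neg_one, Nat.factorial_succ]
  push_cast
  set A := (3 - 2 * α) / 2 + (m:ℝ) with hA
  set q := poch ((3 - 2 * α) / 2) m with hq
  set p := poch (1 - α) m with hp
  set r := (4:ℝ) ^ (-((1 - 2 * α) / 2 + (m:ℝ))) with hr
  field_simp
  ring

lemma KC_succ_abs {α : ℝ} (c₂ : ℝ) (hc : ∀ n : ℕ, (3 - 2 * α) / 2 ≠ -(n : ℝ)) (m : ℕ) :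
    |KC α c₂ (m + 1)| = |KC α c₂ m| * (|1 - α + m| / (4 * |(3 - 2 * α) / 2 + m| * (m + 1))) := by
  have h2 : ((3 - 2 * α) / 2 + m) ≠ 0 := fun h => hc m (by linarith)
  have h4 : ((m : ℝ) + 1) ≠ 0 := by positivity
  have := KC_succ c₂ hc m
  have hD : (4 * ((3 - 2 * α) / 2 + (m:ℝ)) * (m + 1)) ≠ 0 := by
    apply mul_ne_zero (mul_ne_zero (by norm_num) h2) h4
  have hKC : KC α c₂ (m + 1) = KC α c₂ m * (-(1 - α + m)) / (4 * ((3 - 2 * α) / 2 + m) * (m + 1)) := by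
    rw [eq_div_iff hD]; exact this
  rw [hKC, abs_div, abs_mul, abs_neg]
  rw [abs_mul, abs_mul]
  have : |(4:ℝ)| = 4 := by norm_num
  rw [this, abs_of_pos (by positivity : (0:ℝ) < (m:ℝ)+1)]
  ring

lemma sumKC {α : ℝ} (c₂ : ℝ) (hc : ∀ n : ℕ, (3 - 2 * α) / 2 ≠ -(n : ℝ)) {ρ : ℝ} (hρ : 0 < ρ) :
    Summable (fun m : ℕ => |KC α c₂ m| * ρ ^ m) := by
  apply summable_of_ratio_norm_eventually_le (r := 1/2) (by norm_num)
  obtain ⟨N, hN⟩ := exists_nat_ge (|1 - α| + 2 * |(3 - 2 * α) / 2| + 2 * ρ + 1)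
  filter_upwards [Filter.eventually_ge_atTop N] with m hm
  have hmR : (|1 - α| + 2 * |(3 - 2 * α) / 2| + 2 * ρ + 1) ≤ (m:ℝ) :=
    hN.trans (Nat.cast_le.mpr hm)
  have hb1 : |1 - α + (m:ℝ)| ≤ |1 - α| + m := by
    calc |1 - α + (m:ℝ)| ≤ |1 - α| + |(m:ℝ)| := abs_add_le _ _
    _ = |1 - α| + m := by rw [abs_of_nonneg (by positivity : (0:ℝ) ≤ (m:ℝ))]
  have hb2 : (m:ℝ) - |(3 - 2 * α) / 2| ≤ |(3 - 2 * α) / 2 + m| := by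
    have h := abs_add_le (-((3 - 2 * α) / 2)) ((3 - 2 * α) / 2 + m)
    rw [abs_neg] at h
    have he : -((3 - 2 * α) / 2) + ((3 - 2 * α) / 2 + (m:ℝ)) = m := by ring
    rw [he, abs_of_nonneg (by positivity : (0:ℝ) ≤ (m:ℝ))] at h
    linarith
  have ha1 : (0:ℝ) ≤ |1 - α| := abs_nonneg _
  have ha2 : (0:ℝ) ≤ |(3 - 2 * α) / 2| := abs_nonneg _
  have hq : |1 - α + (m:ℝ)| * ρ / (4 * |(3 - 2 * α) / 2 + m| * (m + 1)) ≤ 1/2 := by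
    rw [div_le_iff₀ (by nlinarith : (0:ℝ) < 4 * |(3 - 2 * α) / 2 + m| * (m + 1))]
    nlinarith
  simp only [Real.norm_eq_abs, abs_mul, abs_abs, abs_pow, abs_of_pos hρ]
  rw [KC_succ_abs c₂ hc m, pow_succ]
  calc |KC α c₂ m| * (|1 - α + ↑m| / (4 * |(3 - 2 * α) / 2 + ↑m| * (↑m + 1))) * (ρ ^ m * ρ)
      = (|KC α c₂ m| * ρ ^ m) * (|1 - α + ↑m| * ρ / (4 * |(3 - 2 * α) / 2 + ↑m| * (↑m + 1))) := by
        ring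
    _ ≤ (|KC α c₂ m| * ρ ^ m) * (1/2) := by
        apply mul_le_mul_of_nonneg_left hq (by positivity)
    _ = 1/2 * (|KC α c₂ m| * ρ ^ m) := by ring



noncomputable def TT (α c₂ : ℝ) (m : ℕ) (x t : ℝ) : ℝ :=
  KC α c₂ m * x ^ (1 - 2 * α + 2 * (m:ℝ)) * t ^ (α - 1 - (m:ℝ))

lemma term_eq {α c₂ x t : ℝ} (hx : 0 < x) (ht : 0 < t) (m : ℕ) :
    c₂ * t ^ (-(1 / 2) : ℝ) * (x ^ 2 / (4 * t)) ^ (((1 : ℝ) - 2 * α) / 2)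
      * (poch (1 - α) m / (poch ((3 - 2 * α) / 2) m * (Nat.factorial m : ℝ))
          * (-(x ^ 2) / (4 * t)) ^ m) = TT α c₂ m x t := by
  have hs : (0:ℝ) < x ^ 2 / (4 * t) := by positivity
  have e1 : (-(x ^ 2) / (4 * t) : ℝ) ^ m = (-1 : ℝ) ^ m * (x ^ 2 / (4 * t)) ^ m := by
    rw [neg_div, neg_pow]
  have e2 : ((x ^ 2 / (4 * t) : ℝ)) ^ m = (x ^ 2 / (4 * t)) ^ ((m : ℕ) : ℝ) :=
    (Real.rpow_natCast _ m).symm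
  have e3 : (x ^ 2 / (4 * t)) ^ (((1:ℝ) - 2 * α) / 2) * (x ^ 2 / (4 * t)) ^ ((m:ℝ))
      = (x ^ 2 / (4 * t)) ^ (((1:ℝ) - 2 * α) / 2 + m) := (Real.rpow_add hs _ _).symm
  have e4 : (x ^ 2 / (4 * t)) ^ (((1:ℝ) - 2 * α) / 2 + m)
      = x ^ (1 - 2 * α + 2 * (m:ℝ)) * ((4:ℝ) ^ (-(((1:ℝ) - 2 * α) / 2 + m))
        * t ^ (-(((1:ℝ) - 2 * α) / 2 + (m:ℝ)))) := by
    rw [Real.div_rpow (by positivity) (by positivity),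
      Real.mul_rpow (by norm_num : (0:ℝ) ≤ 4) ht.le]
    rw [div_eq_mul_inv, mul_inv, ← Real.rpow_neg (by norm_num : (0:ℝ) ≤ 4),
      ← Real.rpow_neg ht.le]
    have : ((x:ℝ) ^ 2) ^ (((1:ℝ) - 2 * α) / 2 + m) = x ^ (1 - 2 * α + 2 * (m:ℝ)) := by
      rw [← Real.rpow_natCast x 2, ← Real.rpow_mul hx.le]
      norm_num
      rw [show ((2:ℝ) * (((1:ℝ) - 2 * α) / 2 + (m:ℝ))) = 1 - 2 * α + 2 * (m:ℝ) from by ring]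
    rw [this]
  have e5 : t ^ (-(1 / 2) : ℝ) * t ^ (-(((1:ℝ) - 2 * α) / 2 + (m:ℝ)))
      = t ^ (α - 1 - (m:ℝ)) := by
    rw [← Real.rpow_add ht]
    norm_num
    ring_nf
  rw [TT, KC]
  calc c₂ * t ^ (-(1 / 2) : ℝ) * (x ^ 2 / (4 * t)) ^ (((1 : ℝ) - 2 * α) / 2)
      * (poch (1 - α) m / (poch ((3 - 2 * α) / 2) m * (Nat.factorial m : ℝ))
          * (-(x ^ 2) / (4 * t)) ^ m)
      = c₂ * (poch (1 - α) m / (poch ((3 - 2 * α) / 2) m * (Nat.factorial m : ℝ)))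
        * (-1:ℝ)^m * ((x ^ 2 / (4 * t)) ^ (((1:ℝ) - 2 * α) / 2) * (x ^ 2 / (4 * t)) ^ ((m:ℝ)))
        * t ^ (-(1 / 2) : ℝ) := by rw [e1, e2]; ring
    _ = c₂ * (poch (1 - α) m / (poch ((3 - 2 * α) / 2) m * (Nat.factorial m : ℝ)))
        * (-1:ℝ)^m * (x ^ (1 - 2 * α + 2 * (m:ℝ)) * ((4:ℝ) ^ (-(((1:ℝ) - 2 * α) / 2 + m))
          * t ^ (-(((1:ℝ) - 2 * α) / 2 + (m:ℝ))))) * t ^ (-(1 / 2) : ℝ) := by rw [e3, e4]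
    _ = c₂ * (poch (1 - α) m / (poch ((3 - 2 * α) / 2) m * (Nat.factorial m : ℝ)))
        * (-1:ℝ)^m * (4:ℝ) ^ (-(((1:ℝ) - 2 * α) / 2 + m)) * x ^ (1 - 2 * α + 2 * (m:ℝ))
        * (t ^ (-(1 / 2) : ℝ) * t ^ (-(((1:ℝ) - 2 * α) / 2 + (m:ℝ)))) := by ring
    _ = _ := by rw [e5]

lemma uSol2_eq_tsum {α c₂ x t : ℝ} (hx : 0 < x) (ht : 0 < t) :
    uSol2 α c₂ x t = ∑' m : ℕ, TT α c₂ m x t := by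
  rw [uSol2, F11, ← tsum_mul_left]
  exact tsum_congr fun m => term_eq hx ht m

lemma rpow_le_sum {a b y e : ℝ} (ha : 0 < a) (hay : a ≤ y) (hyb : y ≤ b) :
    y ^ e ≤ a ^ e + b ^ e := by
  have hy : 0 < y := lt_of_lt_of_le ha hay
  rcases le_or_gt e 0 with h | h
  · have h1 : y ^ e ≤ a ^ e := Real.rpow_le_rpow_of_nonpos ha hay h
    have h2 : (0:ℝ) < b ^ e := Real.rpow_pos_of_pos (lt_of_lt_of_le hy hyb) e
    linarith
  · have h1 : y ^ e ≤ b ^ e := Real.rpow_le_rpow hy.le hyb h.le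
    have h2 : (0:ℝ) < a ^ e := Real.rpow_pos_of_pos ha e
    linarith

lemma rpow_split_nat {z : ℝ} (hz : 0 < z) (e : ℝ) (m : ℕ) :
    z ^ (e - (m:ℝ)) = z ^ e * ((z ^ m)⁻¹) := by
  rw [Real.rpow_sub hz, Real.rpow_natCast, div_eq_mul_inv]

lemma rpow_split_two_nat {z : ℝ} (hz : 0 < z) (e : ℝ) (m : ℕ) :
    z ^ (e + 2 * (m:ℝ)) = z ^ e * (z ^ 2) ^ m := by
  rw [Real.rpow_add hz, ← pow_mul]
  congr 1
  rw [show (2 * (m:ℝ)) = ((2 * m : ℕ) : ℝ) by push_cast; ring, Real.rpow_natCast]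

lemma cast_le_two_pow (m : ℕ) : ((m:ℝ) + 1) ≤ 2 * 2 ^ m := by
  induction m with
  | zero => norm_num
  | succ n ih =>
    have h1 : (1:ℝ) ≤ 2 ^ n := one_le_pow₀ (by norm_num)
    push_cast
    push_cast at ih
    calc (n:ℝ) + 1 + 1 ≤ 2 * 2 ^ n + 2 * 2 ^ n := by linarith
      _ = 2 * 2 ^ (n + 1) := by ring

lemma abs_lin_le {c : ℝ} (m : ℕ) : |c - (m:ℝ)| ≤ (|c| + 2) * 2 ^ m := by
  have h1 : ((m:ℝ) + 1) ≤ 2 * 2 ^ m := cast_le_two_pow m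
  have h2 : (1:ℝ) ≤ 2 ^ m := one_le_pow₀ (by norm_num)
  have h3 : |c - (m:ℝ)| ≤ |c| + m := by
    calc |c - (m:ℝ)| ≤ |c| + |(m:ℝ)| := abs_sub _ _
      _ = |c| + m := by rw [abs_of_nonneg (by positivity : (0:ℝ) ≤ (m:ℝ))]
  nlinarith [abs_nonneg c]

lemma TTt_bound {α c₂ x t : ℝ} (hx : 0 < x) (ht : 0 < t) (m : ℕ) {y : ℝ}
    (hy : y ∈ Set.Ioo (t/2) (2*t)) :
    ‖KC α c₂ m * x ^ (1 - 2*α + 2*(m:ℝ)) * ((α - 1 - (m:ℝ)) * y ^ (α - 1 - (m:ℝ) - 1))‖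
      ≤ (x ^ ((1:ℝ) - 2*α) * (((t/2) ^ (α - 2 : ℝ) + (2*t) ^ (α - 2 : ℝ)) * (|α - 1| + 2)))
        * (|KC α c₂ m| * (4 * x^2 / t) ^ m) := by
  have ht2 : (0:ℝ) < t/2 := by linarith
  have hy0 : (0:ℝ) < y := lt_trans ht2 hy.1
  have hpowm : ((t/2):ℝ) ^ m ≤ y ^ m := pow_le_pow_left₀ ht2.le hy.1.le m
  have hXm : x ^ (1 - 2*α + 2*(m:ℝ)) = x ^ ((1:ℝ) - 2*α) * (x^2)^m := rpow_split_two_nat hx _ m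
  have hYm : y ^ (α - 1 - (m:ℝ) - 1) = y ^ (α - 2 : ℝ) * ((y ^ m)⁻¹) := by
    rw [show (α - 1 - (m:ℝ) - 1) = (α - 2) - (m:ℝ) by ring, rpow_split_nat hy0]
  have hpow : ((x:ℝ)^2)^m * ((2:ℝ)^m * ((t/2)^m)⁻¹) = (4*x^2/t)^m := by
    rw [← inv_pow, ← mul_pow, ← mul_pow]
    congr 1
    field_simp
    ring
  have hX : (0:ℝ) < x ^ ((1:ℝ) - 2*α) * (x^2)^m := by positivity
  rw [hXm, hYm, Real.norm_eq_abs]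
  simp only [abs_mul]
  rw [abs_of_pos (by positivity : (0:ℝ) < x ^ ((1:ℝ) - 2*α)),
    abs_of_pos (by positivity : (0:ℝ) < ((x:ℝ)^2) ^ m),
    abs_of_pos (by positivity : (0:ℝ) < y ^ ((α:ℝ) - 2)),
    abs_of_pos (by positivity : (0:ℝ) < ((y:ℝ) ^ m)⁻¹)]
  calc |KC α c₂ m| * (x ^ ((1:ℝ) - 2*α) * (x^2)^m)
        * (|α - 1 - (m:ℝ)| * (y ^ (α - 2 : ℝ) * (y ^ m)⁻¹))
      ≤ |KC α c₂ m| * (x ^ ((1:ℝ) - 2*α) * (x^2)^m)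
        * (((|α - 1| + 2) * 2 ^ m) * (((t/2) ^ (α - 2 : ℝ) + (2*t) ^ (α - 2 : ℝ))
            * ((t/2) ^ m)⁻¹)) := by
        gcongr <;> first
          | exact abs_lin_le m
          | exact rpow_le_sum ht2 hy.1.le hy.2.le
          | exact hpowm
    _ = (x ^ ((1:ℝ) - 2*α) * (((t/2) ^ (α - 2 : ℝ) + (2*t) ^ (α - 2 : ℝ)) * (|α - 1| + 2)))
        * (|KC α c₂ m| * (4 * x^2 / t) ^ m) := by
        rw [← hpow]; ring

lemma TT0_bound {α c₂ x t : ℝ} (hx : 0 < x) (ht : 0 < t) (m : ℕ) {y : ℝ}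
    (hy : y ∈ Set.Ioo (t/2) (2*t)) :
    ‖TT α c₂ m x y‖
      ≤ (x ^ ((1:ℝ) - 2*α) * ((t/2) ^ (α - 1 : ℝ) + (2*t) ^ (α - 1 : ℝ)))
        * (|KC α c₂ m| * (2 * x^2 / t) ^ m) := by
  have ht2 : (0:ℝ) < t/2 := by linarith
  have hy0 : (0:ℝ) < y := lt_trans ht2 hy.1
  have hpowm : ((t/2):ℝ) ^ m ≤ y ^ m := pow_le_pow_left₀ ht2.le hy.1.le m
  have hXm : x ^ (1 - 2*α + 2*(m:ℝ)) = x ^ ((1:ℝ) - 2*α) * (x^2)^m := rpow_split_two_nat hx _ m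
  have hYm : y ^ (α - 1 - (m:ℝ)) = y ^ (α - 1 : ℝ) * ((y ^ m)⁻¹) := rpow_split_nat hy0 _ m
  have hpow : ((x:ℝ)^2)^m * ((t/2)^m)⁻¹ = (2*x^2/t)^m := by
    rw [← inv_pow, ← mul_pow]
    congr 1
    field_simp
  rw [TT, hXm, hYm, Real.norm_eq_abs]
  simp only [abs_mul]
  rw [abs_of_pos (by positivity : (0:ℝ) < x ^ ((1:ℝ) - 2*α)),
    abs_of_pos (by positivity : (0:ℝ) < ((x:ℝ)^2) ^ m),
    abs_of_pos (by positivity : (0:ℝ) < y ^ ((α:ℝ) - 1)),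
    abs_of_pos (by positivity : (0:ℝ) < ((y:ℝ) ^ m)⁻¹)]
  calc |KC α c₂ m| * (x ^ ((1:ℝ) - 2*α) * (x^2)^m) * (y ^ (α - 1 : ℝ) * (y ^ m)⁻¹)
      ≤ |KC α c₂ m| * (x ^ ((1:ℝ) - 2*α) * (x^2)^m)
        * (((t/2) ^ (α - 1 : ℝ) + (2*t) ^ (α - 1 : ℝ)) * ((t/2) ^ m)⁻¹) := by
        gcongr
        exact rpow_le_sum ht2 hy.1.le hy.2.le
    _ = _ := by rw [← hpow]; ring

lemma t_hasDeriv {α c₂ : ℝ} (hc : ∀ n : ℕ, (3 - 2 * α) / 2 ≠ -(n : ℝ)) {x t : ℝ}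
    (hx : 0 < x) (ht : 0 < t) :
    HasDerivAt (fun y => ∑' m : ℕ, TT α c₂ m x y)
      (∑' m : ℕ, KC α c₂ m * x ^ (1 - 2*α + 2*(m:ℝ)) * ((α - 1 - (m:ℝ)) * t ^ (α - 1 - (m:ℝ) - 1))) t ∧
    Summable (fun m : ℕ =>
      KC α c₂ m * x ^ (1 - 2*α + 2*(m:ℝ)) * ((α - 1 - (m:ℝ)) * t ^ (α - 1 - (m:ℝ) - 1))) := by
  have hρ : (0:ℝ) < 4 * x^2 / t := by positivity
  have hu : Summable (fun m : ℕ =>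
      (x ^ ((1:ℝ) - 2*α) * (((t/2) ^ (α - 2 : ℝ) + (2*t) ^ (α - 2 : ℝ)) * (|α - 1| + 2)))
        * (|KC α c₂ m| * (4 * x^2 / t) ^ m)) := (sumKC c₂ hc hρ).mul_left _
  have hmem : t ∈ Set.Ioo (t/2) (2*t) := ⟨by linarith, by linarith⟩
  have hderiv : ∀ (m : ℕ) (y : ℝ), y ∈ Set.Ioo (t/2) (2*t) →
      HasDerivAt (fun z => TT α c₂ m x z)
        (KC α c₂ m * x ^ (1 - 2*α + 2*(m:ℝ)) * ((α - 1 - (m:ℝ)) * y ^ (α - 1 - (m:ℝ) - 1))) y := by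
    intro m y hy
    have ht2 : (0:ℝ) < t/2 := by linarith
    have hy0 : y ≠ 0 := (lt_trans ht2 hy.1).ne'
    have h := (Real.hasDerivAt_rpow_const (x := y) (p := α - 1 - (m:ℝ))
      (Or.inl hy0)).const_mul (KC α c₂ m * x ^ (1 - 2*α + 2*(m:ℝ)))
    simpa [TT, mul_assoc] using h
  have hsum0 : Summable (fun m : ℕ => TT α c₂ m x t) := by
    apply Summable.of_norm_bounded ((sumKC c₂ hc (by positivity : (0:ℝ) < 2 * x^2 / t)).mul_left
      (x ^ ((1:ℝ) - 2*α) * ((t/2) ^ (α - 1 : ℝ) + (2*t) ^ (α - 1 : ℝ))))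
    intro m
    exact TT0_bound hx ht m hmem
  constructor
  · exact hasDerivAt_tsum_of_isPreconnected hu isOpen_Ioo isPreconnected_Ioo hderiv
      (fun m y hy => TTt_bound hx ht m hy) hmem hsum0 hmem
  · exact Summable.of_norm_bounded hu (fun m => TTt_bound hx ht m hmem)

lemma abs_lin2_le {c : ℝ} (m : ℕ) : |c + 2 * (m:ℝ)| ≤ (|c| + 2) * 2 ^ m := by
  have h1 : (m:ℝ) < 2 ^ m := by exact_mod_cast (Nat.lt_two_pow_self (n := m))
  have h2 : (1:ℝ) ≤ 2 ^ m := one_le_pow₀ (by norm_num)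
  have h3 : |c + 2 * (m:ℝ)| ≤ |c| + 2 * m := by
    calc |c + 2 * (m:ℝ)| ≤ |c| + |2 * (m:ℝ)| := abs_add_le _ _
      _ = |c| + 2 * m := by rw [abs_of_nonneg (by positivity : (0:ℝ) ≤ 2 * (m:ℝ))]
  nlinarith [abs_nonneg c]

noncomputable def TX1 (α c₂ t : ℝ) (m : ℕ) (y : ℝ) : ℝ :=
  KC α c₂ m * ((1 - 2*α + 2*(m:ℝ)) * y ^ (1 - 2*α + 2*(m:ℝ) - 1)) * t ^ (α - 1 - (m:ℝ))

noncomputable def TX2 (α c₂ t : ℝ) (m : ℕ) (y : ℝ) : ℝ :=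
  KC α c₂ m * ((1 - 2*α + 2*(m:ℝ)) * ((1 - 2*α + 2*(m:ℝ) - 1) * y ^ (1 - 2*α + 2*(m:ℝ) - 1 - 1)))
    * t ^ (α - 1 - (m:ℝ))

lemma TTx0_bound {α c₂ x t : ℝ} (hx : 0 < x) (ht : 0 < t) (m : ℕ) {y : ℝ}
    (hy : y ∈ Set.Ioo (x/2) (2*x)) :
    ‖TT α c₂ m y t‖
      ≤ ((((x/2) ^ ((1:ℝ) - 2*α) + (2*x) ^ ((1:ℝ) - 2*α))) * t ^ (α - 1 : ℝ))
        * (|KC α c₂ m| * (4 * x^2 / t) ^ m) := by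
  have hx2 : (0:ℝ) < x/2 := by linarith
  have hy0 : (0:ℝ) < y := lt_trans hx2 hy.1
  have hsq : y^2 ≤ 4 * x^2 := by nlinarith [hy.2, hy0]
  have hXm : y ^ (1 - 2*α + 2*(m:ℝ)) = y ^ ((1:ℝ) - 2*α) * (y^2)^m := rpow_split_two_nat hy0 _ m
  have hYm : t ^ (α - 1 - (m:ℝ)) = t ^ (α - 1 : ℝ) * ((t ^ m)⁻¹) := rpow_split_nat ht _ m
  have hpow : ((4:ℝ) * x^2)^m * (t^m)⁻¹ = (4*x^2/t)^m := by
    rw [← inv_pow, ← mul_pow, ← div_eq_mul_inv]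
  rw [TT, hXm, hYm, Real.norm_eq_abs]
  simp only [abs_mul]
  rw [abs_of_pos (by positivity : (0:ℝ) < y ^ ((1:ℝ) - 2*α)),
    abs_of_pos (by positivity : (0:ℝ) < ((y:ℝ)^2) ^ m),
    abs_of_pos (by positivity : (0:ℝ) < t ^ ((α:ℝ) - 1)),
    abs_of_pos (by positivity : (0:ℝ) < ((t:ℝ) ^ m)⁻¹)]
  calc |KC α c₂ m| * (y ^ ((1:ℝ) - 2*α) * (y^2)^m) * (t ^ (α - 1 : ℝ) * (t ^ m)⁻¹)
      ≤ |KC α c₂ m| * (((x/2) ^ ((1:ℝ) - 2*α) + (2*x) ^ ((1:ℝ) - 2*α)) * ((4:ℝ)*x^2)^m)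
        * (t ^ (α - 1 : ℝ) * (t ^ m)⁻¹) := by
        gcongr <;> first
          | exact rpow_le_sum hx2 hy.1.le hy.2.le
          | exact pow_le_pow_left (by positivity) hsq m
    _ = _ := by rw [← hpow]; ring

lemma TX1_bound {α c₂ x t : ℝ} (hx : 0 < x) (ht : 0 < t) (m : ℕ) {y : ℝ}
    (hy : y ∈ Set.Ioo (x/2) (2*x)) :
    ‖TX1 α c₂ t m y‖
      ≤ ((((x/2) ^ (-(2*α) : ℝ) + (2*x) ^ (-(2*α) : ℝ)) * (|1 - 2*α| + 2)) * t ^ (α - 1 : ℝ))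
        * (|KC α c₂ m| * (8 * x^2 / t) ^ m) := by
  have hx2 : (0:ℝ) < x/2 := by linarith
  have hy0 : (0:ℝ) < y := lt_trans hx2 hy.1
  have hsq : y^2 ≤ 4 * x^2 := by nlinarith [hy.2, hy0]
  have hXm : y ^ (1 - 2*α + 2*(m:ℝ) - 1) = y ^ (-(2*α) : ℝ) * (y^2)^m := by
    rw [show (1 - 2*α + 2*(m:ℝ) - 1) = -(2*α) + 2*(m:ℝ) by ring, rpow_split_two_nat hy0]
  have hYm : t ^ (α - 1 - (m:ℝ)) = t ^ (α - 1 : ℝ) * ((t ^ m)⁻¹) := rpow_split_nat ht _ m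
  have hpow : ((4:ℝ) * x^2)^m * ((2:ℝ)^m * (t^m)⁻¹) = (8*x^2/t)^m := by
    rw [← inv_pow, ← mul_pow, ← mul_pow]; congr 1; field_simp; ring
  rw [TX1, hXm, hYm, Real.norm_eq_abs]
  simp only [abs_mul]
  rw [abs_of_pos (by positivity : (0:ℝ) < y ^ (-(2*α) : ℝ)),
    abs_of_pos (by positivity : (0:ℝ) < ((y:ℝ)^2) ^ m),
    abs_of_pos (by positivity : (0:ℝ) < t ^ ((α:ℝ) - 1)),
    abs_of_pos (by positivity : (0:ℝ) < ((t:ℝ) ^ m)⁻¹)]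
  calc |KC α c₂ m| * (|1 - 2*α + 2*(m:ℝ)| * (y ^ (-(2*α) : ℝ) * (y^2)^m))
        * (t ^ (α - 1 : ℝ) * (t ^ m)⁻¹)
      ≤ |KC α c₂ m| * (((|1 - 2*α| + 2) * 2 ^ m)
          * (((x/2) ^ (-(2*α) : ℝ) + (2*x) ^ (-(2*α) : ℝ)) * ((4:ℝ)*x^2)^m))
        * (t ^ (α - 1 : ℝ) * (t ^ m)⁻¹) := by
        gcongr <;> first
          | exact abs_lin2_le m
          | exact rpow_le_sum hx2 hy.1.le hy.2.le
          | exact pow_le_pow_left (by positivity) hsq m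
    _ = _ := by rw [← hpow]; ring

lemma TX2_bound {α c₂ x t : ℝ} (hx : 0 < x) (ht : 0 < t) (m : ℕ) {y : ℝ}
    (hy : y ∈ Set.Ioo (x/2) (2*x)) :
    ‖TX2 α c₂ t m y‖
      ≤ ((((x/2) ^ (-1-2*α : ℝ) + (2*x) ^ (-1-2*α : ℝ)) * ((|1 - 2*α| + 2) * (|-(2*α)| + 2)))
          * t ^ (α - 1 : ℝ))
        * (|KC α c₂ m| * (16 * x^2 / t) ^ m) := by
  have hx2 : (0:ℝ) < x/2 := by linarith
  have hy0 : (0:ℝ) < y := lt_trans hx2 hy.1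
  have hsq : y^2 ≤ 4 * x^2 := by nlinarith [hy.2, hy0]
  have hXm : y ^ (1 - 2*α + 2*(m:ℝ) - 1 - 1) = y ^ (-1-2*α : ℝ) * (y^2)^m := by
    rw [show (1 - 2*α + 2*(m:ℝ) - 1 - 1) = (-1-2*α) + 2*(m:ℝ) by ring, rpow_split_two_nat hy0]
  have habs2 : |1 - 2*α + 2*(m:ℝ) - 1| ≤ (|-(2*α)| + 2) * 2 ^ m := by
    rw [show (1 - 2*α + 2*(m:ℝ) - 1) = -(2*α) + 2*(m:ℝ) by ring]
    exact abs_lin2_le m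
  have hYm : t ^ (α - 1 - (m:ℝ)) = t ^ (α - 1 : ℝ) * ((t ^ m)⁻¹) := rpow_split_nat ht _ m
  have hpow : ((4:ℝ) * x^2)^m * ((2:ℝ)^m * ((2:ℝ)^m * (t^m)⁻¹)) = (16*x^2/t)^m := by
    rw [← inv_pow, ← mul_pow, ← mul_pow, ← mul_pow]; congr 1; field_simp; ring
  rw [TX2, hXm, hYm, Real.norm_eq_abs]
  simp only [abs_mul]
  rw [abs_of_pos (by positivity : (0:ℝ) < y ^ (-1-2*α : ℝ)),
    abs_of_pos (by positivity : (0:ℝ) < ((y:ℝ)^2) ^ m),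
    abs_of_pos (by positivity : (0:ℝ) < t ^ ((α:ℝ) - 1)),
    abs_of_pos (by positivity : (0:ℝ) < ((t:ℝ) ^ m)⁻¹)]
  calc |KC α c₂ m| * (|1 - 2*α + 2*(m:ℝ)| * (|1 - 2*α + 2*(m:ℝ) - 1|
          * (y ^ (-1-2*α : ℝ) * (y^2)^m))) * (t ^ (α - 1 : ℝ) * (t ^ m)⁻¹)
      ≤ |KC α c₂ m| * (((|1 - 2*α| + 2) * 2 ^ m) * (((|-(2*α)| + 2) * 2 ^ m)
          * (((x/2) ^ (-1-2*α : ℝ) + (2*x) ^ (-1-2*α : ℝ)) * ((4:ℝ)*x^2)^m)))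
        * (t ^ (α - 1 : ℝ) * (t ^ m)⁻¹) := by
        gcongr <;> first
          | exact abs_lin2_le m
          | exact habs2
          | exact rpow_le_sum hx2 hy.1.le hy.2.le
          | exact pow_le_pow_left (by positivity) hsq m
    _ = _ := by rw [← hpow]; ring

lemma x_hasDeriv1 {α c₂ : ℝ} (hc : ∀ n : ℕ, (3 - 2 * α) / 2 ≠ -(n : ℝ)) {x t : ℝ}
    (hx : 0 < x) (ht : 0 < t) : ∀ y ∈ Set.Ioo (x/2) (2*x),
    HasDerivAt (fun z => ∑' m : ℕ, TT α c₂ m z t) (∑' m : ℕ, TX1 α c₂ t m y) y := by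
  intro y hy
  have hu : Summable (fun m : ℕ =>
      ((((x/2) ^ (-(2*α) : ℝ) + (2*x) ^ (-(2*α) : ℝ)) * (|1 - 2*α| + 2)) * t ^ (α - 1 : ℝ))
        * (|KC α c₂ m| * (8 * x^2 / t) ^ m)) :=
    (sumKC c₂ hc (by positivity : (0:ℝ) < 8 * x^2 / t)).mul_left _
  have hmem : x ∈ Set.Ioo (x/2) (2*x) := ⟨by linarith, by linarith⟩
  have hderiv : ∀ (m : ℕ) (z : ℝ), z ∈ Set.Ioo (x/2) (2*x) →
      HasDerivAt (fun w => TT α c₂ m w t) (TX1 α c₂ t m z) z := by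
    intro m z hz
    have hz0 : z ≠ 0 := (lt_trans (by linarith : (0:ℝ) < x/2) hz.1).ne'
    have h := ((Real.hasDerivAt_rpow_const (x := z) (p := 1 - 2*α + 2*(m:ℝ))
      (Or.inl hz0)).const_mul (KC α c₂ m)).mul_const (t ^ (α - 1 - (m:ℝ)))
    simpa [TT, TX1] using h
  have hsum0 : Summable (fun m : ℕ => TT α c₂ m x t) :=
    Summable.of_norm_bounded ((sumKC c₂ hc (by positivity : (0:ℝ) < 4 * x^2 / t)).mul_left _)
      (fun m => TTx0_bound hx ht m hmem)
  exact hasDerivAt_tsum_of_isPreconnected hu isOpen_Ioo isPreconnected_Ioo hderiv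
    (fun m z hz => TX1_bound hx ht m hz) hmem hsum0 hy

lemma x_hasDeriv2 {α c₂ : ℝ} (hc : ∀ n : ℕ, (3 - 2 * α) / 2 ≠ -(n : ℝ)) {x t : ℝ}
    (hx : 0 < x) (ht : 0 < t) :
    HasDerivAt (fun z => ∑' m : ℕ, TX1 α c₂ t m z) (∑' m : ℕ, TX2 α c₂ t m x) x ∧
    Summable (fun m : ℕ => TX2 α c₂ t m x) ∧ Summable (fun m : ℕ => TX1 α c₂ t m x) := by
  have hu : Summable (fun m : ℕ =>
      ((((x/2) ^ (-1-2*α : ℝ) + (2*x) ^ (-1-2*α : ℝ)) * ((|1 - 2*α| + 2) * (|-(2*α)| + 2)))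
          * t ^ (α - 1 : ℝ))
        * (|KC α c₂ m| * (16 * x^2 / t) ^ m)) :=
    (sumKC c₂ hc (by positivity : (0:ℝ) < 16 * x^2 / t)).mul_left _
  have hmem : x ∈ Set.Ioo (x/2) (2*x) := ⟨by linarith, by linarith⟩
  have hderiv : ∀ (m : ℕ) (z : ℝ), z ∈ Set.Ioo (x/2) (2*x) →
      HasDerivAt (fun w => TX1 α c₂ t m w) (TX2 α c₂ t m z) z := by
    intro m z hz
    have hz0 : z ≠ 0 := (lt_trans (by linarith : (0:ℝ) < x/2) hz.1).ne'
    have h := (((Real.hasDerivAt_rpow_const (x := z) (p := 1 - 2*α + 2*(m:ℝ) - 1)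
      (Or.inl hz0)).const_mul (1 - 2*α + 2*(m:ℝ))).const_mul
        (KC α c₂ m)).mul_const (t ^ (α - 1 - (m:ℝ)))
    simpa [TX1, TX2, mul_assoc] using h
  have hsum1 : Summable (fun m : ℕ => TX1 α c₂ t m x) :=
    Summable.of_norm_bounded ((sumKC c₂ hc (by positivity : (0:ℝ) < 8 * x^2 / t)).mul_left _)
      (fun m => TX1_bound hx ht m hmem)
  refine ⟨hasDerivAt_tsum_of_isPreconnected hu isOpen_Ioo isPreconnected_Ioo hderiv
    (fun m z hz => TX2_bound hx ht m hz) hmem hsum1 hmem,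
    Summable.of_norm_bounded hu (fun m => TX2_bound hx ht m hmem), hsum1⟩


theorem uSol2_solves (α c₂ : ℝ) (hα : 0 < α)
    (hc : ∀ n : ℕ, (3 - 2 * α) / 2 ≠ -(n : ℝ)) :
    ∀ x t : ℝ, 0 < x → 0 < t →
      deriv (fun s => uSol2 α c₂ x s) t
        - iteratedDeriv 2 (fun s => uSol2 α c₂ s t) x
        - (2 * α / x) * deriv (fun s => uSol2 α c₂ s t) x = 0 := by
  intro x t hx ht
  have hxm : x ∈ Set.Ioo (x/2) (2*x) := ⟨by linarith, by linarith⟩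
  have htm : t ∈ Set.Ioo (t/2) (2*t) := ⟨by linarith, by linarith⟩
  -- t derivative
  have hDt : deriv (fun s => uSol2 α c₂ x s) t
      = ∑' m : ℕ, KC α c₂ m * x ^ (1 - 2*α + 2*(m:ℝ)) * ((α - 1 - (m:ℝ)) * t ^ (α - 1 - (m:ℝ) - 1)) := by
    have he : (fun s => uSol2 α c₂ x s) =ᶠ[nhds t] (fun y => ∑' m : ℕ, TT α c₂ m x y) := by
      filter_upwards [isOpen_Ioo.mem_nhds htm] with y hy
      exact uSol2_eq_tsum hx (lt_trans (by linarith) hy.1)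
    rw [he.deriv_eq]
    exact ((t_hasDeriv hc hx ht).1).deriv
  -- x first derivative on a neighborhood
  have hder1 : ∀ y ∈ Set.Ioo (x/2) (2*x),
      deriv (fun s => uSol2 α c₂ s t) y = ∑' m : ℕ, TX1 α c₂ t m y := by
    intro y hy
    have hy0 : (0:ℝ) < y := lt_trans (by linarith) hy.1
    have he : (fun s => uSol2 α c₂ s t) =ᶠ[nhds y] (fun z => ∑' m : ℕ, TT α c₂ m z t) := by
      filter_upwards [isOpen_Ioo.mem_nhds hy] with z hz
      exact uSol2_eq_tsum (lt_trans (by linarith) hz.1) ht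
    rw [he.deriv_eq]
    exact (x_hasDeriv1 hc hx ht y hy).deriv
  have hDx1 : deriv (fun s => uSol2 α c₂ s t) x = ∑' m : ℕ, TX1 α c₂ t m x := hder1 x hxm
  -- x second derivative
  obtain ⟨hd2, hsum2, hsum1⟩ := x_hasDeriv2 (c₂ := c₂) hc hx ht
  have hDx2 : iteratedDeriv 2 (fun s => uSol2 α c₂ s t) x = ∑' m : ℕ, TX2 α c₂ t m x := by
    rw [iteratedDeriv_succ, iteratedDeriv_one]
    have he2 : (deriv (fun s => uSol2 α c₂ s t)) =ᶠ[nhds x] (fun y => ∑' m : ℕ, TX1 α c₂ t m y) := by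
      filter_upwards [isOpen_Ioo.mem_nhds hxm] with y hy
      exact hder1 y hy
    rw [he2.deriv_eq]
    exact hd2.deriv
  rw [hDt, hDx1, hDx2]
  -- telescoping
  set H : ℕ → ℝ := fun m => TX2 α c₂ t m x + (2*α/x) * TX1 α c₂ t m x with hH
  have hsumH : Summable H := hsum2.add (hsum1.mul_left _)
  have hshift : ∀ m : ℕ,
      KC α c₂ m * x ^ (1 - 2*α + 2*(m:ℝ)) * ((α - 1 - (m:ℝ)) * t ^ (α - 1 - (m:ℝ) - 1))
        = H (m+1) := by
    intro m
    have S := KC_succ c₂ hc m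
    have e1 : x ^ (1 - 2*α + 2*(((m+1:ℕ)):ℝ) - 1 - 1) = x ^ (1 - 2*α + 2*(m:ℝ)) := by
      rw [show (1 - 2*α + 2*(((m+1:ℕ)):ℝ) - 1 - 1) = 1 - 2*α + 2*(m:ℝ) by push_cast; ring]
    have e2 : x ^ (1 - 2*α + 2*(((m+1:ℕ)):ℝ) - 1) = x ^ (1 - 2*α + 2*(m:ℝ)) * x := by
      rw [show (1 - 2*α + 2*(((m+1:ℕ)):ℝ) - 1) = (1 - 2*α + 2*(m:ℝ)) + 1 by push_cast; ring,
        Real.rpow_add hx, Real.rpow_one]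
    have e3 : t ^ (α - 1 - (((m+1:ℕ)):ℝ)) = t ^ (α - 1 - (m:ℝ) - 1) := by
      rw [show (α - 1 - (((m+1:ℕ)):ℝ)) = α - 1 - (m:ℝ) - 1 by push_cast; ring]
    rw [hH]
    show _ = TX2 α c₂ t (m+1) x + (2*α/x) * TX1 α c₂ t (m+1) x
    rw [TX1, TX2, e1, e2, e3]
    have hxne : x ≠ 0 := hx.ne'
    have hxi : x * x⁻¹ = 1 := mul_inv_cancel₀ hxne
    push_cast
    linear_combination (-(x ^ (1 - 2*α + 2*(m:ℝ)) * t ^ (α - 1 - (m:ℝ) - 1))) * S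
      + (-(2*α*KC α c₂ (m+1)*(1 - 2*α + 2*((m:ℝ)+1))*x ^ (1 - 2*α + 2*(m:ℝ))
        * t ^ (α - 1 - (m:ℝ) - 1))) * hxi
  have hH0 : H 0 = 0 := by
    rw [hH]
    show TX2 α c₂ t 0 x + (2*α/x) * TX1 α c₂ t 0 x = 0
    have e : x ^ (1 - 2*α + 2*(((0:ℕ)):ℝ) - 1) = x ^ (1 - 2*α + 2*(((0:ℕ)):ℝ) - 1 - 1) * x := by
      have h := Real.rpow_add hx (1 - 2*α + 2*(((0:ℕ)):ℝ) - 1 - 1) 1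
      rw [Real.rpow_one] at h
      rw [← h]
      congr 1
      ring
    rw [TX1, TX2, e]
    field_simp
    ring
  calc (∑' m : ℕ, KC α c₂ m * x ^ (1 - 2*α + 2*(m:ℝ)) * ((α - 1 - (m:ℝ)) * t ^ (α - 1 - (m:ℝ) - 1)))
        - (∑' m : ℕ, TX2 α c₂ t m x) - (2*α/x) * (∑' m : ℕ, TX1 α c₂ t m x)
      = (∑' m : ℕ, H (m+1)) - ((∑' m : ℕ, TX2 α c₂ t m x) + (∑' m : ℕ, (2*α/x) * TX1 α c₂ t m x)) := by
        rw [tsum_congr hshift, tsum_mul_left]; ring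
    _ = (∑' m : ℕ, H (m+1)) - (∑' m : ℕ, H m) := by
        rw [← Summable.tsum_add hsum2 (hsum1.mul_left (2*α/x))]
    _ = 0 := by
        rw [Summable.tsum_eq_zero_add hsumH, hH0]
        ring
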